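/- Let α satisfy φ < α < 2, where φ = (1 + √5)/2 is the golden ratio, and let n₁, n₂, n₃, m₁, m₂, k be positive integers such that k ≤ k₀(α) + 1 and (2^k·(2α − 1)/(α − 1))·n₃ ≥ n₁ + n₂ + n₃. Then H_α(n₁, m₁) + H_α(n₂, m₂) + k·n₃ + n₁ + 2·n₂ ≤ G_α(n₁ + n₂ + n₃, m₁ + m₂ + 1), where G_α(n, m) = n·(d_α − 1 + c_α·log₂ m) and H_α(n, m) = n·(d_α + c_α·log₂ m). -/
import Mathlib


open Real

/-- The constant `c_α = (α+1)/((α+1)·log₂(α+1) − α·log₂ α)`. -/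
noncomputable def cA (α : ℝ) : ℝ :=
  (α + 1) / ((α + 1) * logb 2 (α + 1) - α * logb 2 α)

/-- `k₀(α)` is the least `ℓ ∈ ℕ` such that `(α² − α − 1)/(α − 1) ≥ α^(−ℓ)`. -/
noncomputable def k0 (α : ℝ) : ℕ :=
  sInf {ℓ : ℕ | (α ^ 2 - α - 1) / (α - 1) ≥ α ^ (-(ℓ : ℝ))}

/-- The constant `d_α = 2^(k₀(α)+1)·max{k₀(α)+1, 3}·(2α − 1)/(α − 1) + 1`. -/
noncomputable def dA (α : ℝ) : ℝ :=
  2 ^ (k0 α + 1) * max ((k0 α : ℝ) + 1) 3 * (2 * α - 1) / (α - 1) + 1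

/-- `G_α(n, m) = n·(d_α − 1 + c_α·log₂ m)`. -/
noncomputable def G (α : ℝ) (n m : ℕ) : ℝ := (n : ℝ) * (dA α - 1 + cA α * logb 2 m)

/-- `H_α(n, m) = n·(d_α + c_α·log₂ m)`. -/
noncomputable def H (α : ℝ) (n m : ℕ) : ℝ := (n : ℝ) * (dA α + cA α * logb 2 m)

set_option maxHeartbeats 1000000 in
/-- Lemma 17(d): for `φ < α < 2`, if `k ≤ k₀(α)+1` and
`(2^k(2α−1)/(α−1))·n₃ ≥ n₁ + n₂ + n₃` then
`H_α(n₁,m₁) + H_α(n₂,m₂) + k·n₃ + n₁ + 2n₂ ≤ G_α(n₁+n₂+n₃, m₁+m₂+1)`. -/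
theorem GHalpha_bound_d (α : ℝ) (hφ : (1 + Real.sqrt 5) / 2 < α) (hα2 : α < 2)
    (n₁ n₂ n₃ m₁ m₂ k : ℕ)
    (hn₁ : 0 < n₁) (hn₂ : 0 < n₂) (hn₃ : 0 < n₃)
    (hm₁ : 0 < m₁) (hm₂ : 0 < m₂) (hk : 0 < k)
    (hk0 : k ≤ k0 α + 1)
    (h : (n₁ : ℝ) + n₂ + n₃ ≤ 2 ^ k * (2 * α - 1) / (α - 1) * n₃) :
    H α n₁ m₁ + H α n₂ m₂ + (k : ℝ) * n₃ + n₁ + 2 * n₂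
      ≤ G α (n₁ + n₂ + n₃) (m₁ + m₂ + 1) := by
  -- basic facts about α
  have h32 : (3/2 : ℝ) < α := by
    nlinarith [Real.sq_sqrt (by norm_num : (0:ℝ) ≤ 5), Real.sqrt_nonneg 5]
  have hα1 : (1:ℝ) < α := by linarith
  have hαm1 : (0:ℝ) < α - 1 := by linarith
  set r : ℝ := (2 * α - 1) / (α - 1) with hrdef
  have hr1 : (1:ℝ) ≤ r := by
    rw [hrdef, le_div_iff₀ hαm1]; linarith
  have hr0 : (0:ℝ) ≤ r := by linarith
  -- cA is nonnegative
  have hc : 0 ≤ cA α := by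
    apply div_nonneg (by linarith)
    have hlog : logb 2 α ≤ logb 2 (α + 1) :=
      (Real.logb_le_logb one_lt_two (by linarith) (by linarith)).mpr (by linarith)
    have hlogα : 0 ≤ logb 2 α := Real.logb_nonneg one_lt_two hα1.le
    nlinarith
  set K : ℕ := k0 α with hKdef
  set M : ℝ := max ((K : ℝ) + 1) 3 with hMdef
  have hM3 : (3:ℝ) ≤ M := le_max_right _ _
  have hMK : (K : ℝ) + 1 ≤ M := le_max_left _ _
  have h2k : (2:ℝ) ^ k ≤ 2 ^ (K + 1) := pow_le_pow_right₀ one_le_two hk0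
  have h2K : (2:ℝ) ≤ 2 ^ (K + 1) := by
    calc (2:ℝ) = 2 ^ 1 := (pow_one 2).symm
    _ ≤ 2 ^ (K + 1) := pow_le_pow_right₀ one_le_two (by omega)
  have h2Kpos : (0:ℝ) ≤ (2:ℝ) ^ (K + 1) := by positivity
  -- key scalar inequality : k - 2 + 3·2^k·r ≤ 2^(K+1)·M·r + 1
  have hkM : (k : ℝ) ≤ (M - 3) * 2 ^ (K + 1) + 3 := by
    rcases le_or_gt K 2 with hK2 | hK2
    · have hk3 : (k:ℝ) ≤ 3 := by
        have : k ≤ 3 := by omega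
        exact_mod_cast this
      nlinarith
    · have hKM : M = (K : ℝ) + 1 := by
        rw [hMdef]; apply max_eq_left; push_cast
        have : (3:ℕ) ≤ K := hK2
        have : (3:ℝ) ≤ (K:ℝ) := by exact_mod_cast this
        linarith
      have hK3 : (3:ℝ) ≤ (K:ℝ) := by exact_mod_cast (by omega : 3 ≤ K)
      have hkK : (k : ℝ) ≤ (K:ℝ) + 1 := by exact_mod_cast hk0
      rw [hKM]
      have hp : ((K:ℝ) - 2) * 2 ≤ ((K:ℝ) - 2) * 2 ^ (K + 1) :=
        mul_le_mul_of_nonneg_left h2K (by linarith)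
      linarith
  have hscalar : (k : ℝ) - 2 + 3 * (2 ^ k * r) ≤ 2 ^ (K + 1) * M * r + 1 := by
    have h1 : 3 * ((2:ℝ) ^ k * r) ≤ 3 * (2 ^ (K + 1) * r) := by
      apply mul_le_mul_of_nonneg_left _ (by norm_num)
      exact mul_le_mul_of_nonneg_right h2k hr0
    have h2 : (k : ℝ) - 2 ≤ (M - 3) * 2 ^ (K + 1) + 1 := by linarith
    have h3 : (M - 3) * 2 ^ (K + 1) ≤ (M - 3) * 2 ^ (K + 1) * r :=
      le_mul_of_one_le_right (mul_nonneg (by linarith) h2Kpos) hr1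
    have h4 : (M - 3) * 2 ^ (K + 1) * r + 3 * (2 ^ (K + 1) * r) = 2 ^ (K + 1) * M * r := by
      ring
    linarith
  -- dA rewritten
  have hdA : dA α = 2 ^ (K + 1) * M * r + 1 := by
    rw [dA, hrdef, ← hKdef, ← hMdef, mul_div_assoc]
  -- main arithmetic bound
  have hS : (n₁ : ℝ) + n₂ + n₃ ≤ 2 ^ k * r * n₃ := by
    rw [hrdef]; calc (n₁ : ℝ) + n₂ + n₃ ≤ 2 ^ k * (2 * α - 1) / (α - 1) * n₃ := h
    _ = 2 ^ k * ((2 * α - 1) / (α - 1)) * n₃ := by ring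
  have hn₃' : (1:ℝ) ≤ (n₃ : ℝ) := by exact_mod_cast hn₃
  have hB : (k : ℝ) * n₃ + 2 * n₁ + 3 * n₂ + n₃ ≤ (n₃ : ℝ) * dA α := by
    rw [hdA]
    have step1 : (k : ℝ) * n₃ + 2 * n₁ + 3 * n₂ + n₃
        ≤ (k : ℝ) * n₃ + 3 * ((n₁:ℝ) + n₂ + n₃) - 2 * n₃ := by
      have h1 : (0:ℝ) ≤ (n₁ : ℝ) := Nat.cast_nonneg _
      linarith
    have step2 : 3 * ((n₁:ℝ) + n₂ + n₃) ≤ 3 * (2 ^ k * r * n₃) := by linarith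
    have step3 : ((k : ℝ) - 2 + 3 * (2 ^ k * r)) * n₃ ≤ (2 ^ (K + 1) * M * r + 1) * n₃ :=
      mul_le_mul_of_nonneg_right hscalar (by linarith)
    have e1 : ((k : ℝ) - 2 + 3 * (2 ^ k * r)) * n₃
        = (k : ℝ) * n₃ + 3 * (2 ^ k * r * n₃) - 2 * n₃ := by ring
    have e2 : ((2:ℝ) ^ (K + 1) * M * r + 1) * n₃ = (n₃ : ℝ) * (2 ^ (K + 1) * M * r + 1) := by
      ring
    linarith
  -- log facts
  set L : ℝ := logb 2 ((m₁:ℝ) + m₂ + 1) with hLdef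
  have hmcast : ((m₁ + m₂ + 1 : ℕ) : ℝ) = (m₁:ℝ) + m₂ + 1 := by push_cast; ring
  have hm₁' : (1:ℝ) ≤ (m₁ : ℝ) := by exact_mod_cast hm₁
  have hm₂' : (1:ℝ) ≤ (m₂ : ℝ) := by exact_mod_cast hm₂
  have hL1 : logb 2 m₁ ≤ L :=
    (Real.logb_le_logb one_lt_two (by linarith) (by linarith)).mpr (by linarith)
  have hL2 : logb 2 m₂ ≤ L :=
    (Real.logb_le_logb one_lt_two (by linarith) (by linarith)).mpr (by linarith)
  have hL0 : 0 ≤ L := Real.logb_nonneg one_lt_two (by linarith)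
  -- assemble
  rw [G, H, H, hmcast, ← hLdef]
  push_cast
  have g1 : 0 ≤ cA α * (L - logb 2 m₁) * n₁ := by
    apply mul_nonneg (mul_nonneg hc (by linarith)) (Nat.cast_nonneg _)
  have g2 : 0 ≤ cA α * (L - logb 2 m₂) * n₂ := by
    apply mul_nonneg (mul_nonneg hc (by linarith)) (Nat.cast_nonneg _)
  have g3 : 0 ≤ cA α * L * n₃ := by
    apply mul_nonneg (mul_nonneg hc hL0) (Nat.cast_nonneg _)
  linarith [hB, g1, g2, g3]
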